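/- arXiv:0804.2018 — 4 statements merged into one kernel-verified Lean document; each statement's English description precedes it below -/
import Mathlib

section
/- For every integer n ≥ 4, the polynomial P_n satisfies P_n(x) = x^2 U_{n-2}(x) - 2x U_{n-3}(x) + U_{n-4}(x), where U_j denotes the Chebyshev polynomial of the second kind of degree j. -/
open Finset Polynomial Real

noncomputable section

/-- Binomial coefficient `C(a, b)` for integer lower index, zero when `b < 0` or `b > a`. -/
def chooseZ (a : ℕ) (b : ℤ) : ℤ := if 0 ≤ b then (a.choose b.toNat : ℤ) else 0

/-- `f n k m p = ∑_{i=0}^{n} (-1)^i C(n,i) C(np+m-ip, n+k)`. -/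
def f (n : ℕ) (k : ℤ) (m p : ℕ) : ℤ :=
  ∑ i ∈ Finset.range (n + 1),
    (-1) ^ i * (n.choose i : ℤ) * chooseZ (n * p + m - i * p) ((n : ℤ) + k)

/-- The coefficients `c(n,k,m,p)`. -/
def c (n : ℕ) (k : ℤ) (m p : ℕ) : ℤ :=
  if 0 ≤ k ∧ k ≤ (n : ℤ) ∧ (n : ℤ) % 2 = k % 2 ∧ 2 * (m : ℤ) ≤ (n : ℤ) + k then
    (-1) ^ ((((n : ℤ) - k) / 2).toNat) *
      f ((((n : ℤ) + k - 2 * m) / 2).toNat) (((n : ℤ) - k) / 2) m p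
  else 0

/-- The polynomial `P_{n,m,p}(x) = ∑_{k=0}^n c(n,k,m,p) x^k`, as a real polynomial. -/
def P (n m p : ℕ) : Polynomial ℝ :=
  ∑ k ∈ Finset.range (n + 1), Polynomial.C ((c n (k : ℤ) m p : ℝ)) * Polynomial.X ^ k
lemma chooseZ_succ (N : ℕ) (r : ℤ) :
    chooseZ (N+1) r = chooseZ N r + chooseZ N (r-1) := by
  unfold chooseZ
  rcases lt_trichotomy r 0 with h | h | h
  · rw [if_neg (by omega), if_neg (by omega), if_neg (by omega)]; ring
  · subst h; norm_num
  · obtain ⟨s, rfl⟩ : ∃ s : ℕ, r = (s:ℤ)+1 := ⟨(r-1).toNat, by omega⟩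
    rw [if_pos (by omega), if_pos (by omega), if_pos (by omega),
      show ((s:ℤ)+1).toNat = s+1 by omega, show ((s:ℤ)+1-1).toNat = s by omega,
      Nat.choose_succ_succ]
    push_cast; ring
lemma chooseZ_add_two (N : ℕ) (r : ℤ) :
    chooseZ (N+2) r = chooseZ N r + 2*chooseZ N (r-1) + chooseZ N (r-2) := by
  rw [show N+2 = (N+1)+1 from rfl, chooseZ_succ, chooseZ_succ, chooseZ_succ,
    show r-1-1 = r-2 by ring]
  ring
lemma sum_pascal (a : ℕ) (g : ℕ → ℤ) :
    ∑ i ∈ Finset.range (a+2), (-1)^i * ((a+1).choose i : ℤ) * g i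
      = ∑ i ∈ Finset.range (a+1), (-1)^i * (a.choose i : ℤ) * (g i - g (i+1)) := by
  have h1 := Finset.sum_range_succ' (fun i => (-1:ℤ)^i * ((a+1).choose i : ℤ) * g i) (a+1)
  have h2 := Finset.sum_range_succ' (fun i => (-1:ℤ)^i * (a.choose i : ℤ) * g i) a
  have expand : ∀ i ∈ Finset.range (a+1), (-1:ℤ)^i * (a.choose i : ℤ) * (g i - g (i+1))
      = (-1:ℤ)^i * (a.choose i : ℤ) * g i + (-1:ℤ)^(i+1) * (a.choose i : ℤ) * g (i+1) := by
    intro i _; rw [pow_succ]; ring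
  have h3 : ∑ i ∈ Finset.range a, (-1:ℤ)^(i+1) * (a.choose (i+1) : ℤ) * g (i+1)
      = ∑ i ∈ Finset.range (a+1), (-1:ℤ)^(i+1) * (a.choose (i+1) : ℤ) * g (i+1) := by
    rw [Finset.sum_range_succ, Nat.choose_succ_self]; push_cast; ring
  have h4 : ∑ i ∈ Finset.range (a+1), (-1:ℤ)^(i+1) * ((a+1).choose (i+1) : ℤ) * g (i+1)
      = ∑ i ∈ Finset.range (a+1), ((-1:ℤ)^(i+1) * (a.choose (i+1) : ℤ) * g (i+1)
          + (-1:ℤ)^(i+1) * (a.choose i : ℤ) * g (i+1)) := by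
    refine Finset.sum_congr rfl fun i _ => ?_
    rw [Nat.choose_succ_succ']
    push_cast; ring
  rw [h1, h4, Finset.sum_add_distrib, Finset.sum_congr rfl expand, Finset.sum_add_distrib, h2, h3]
  simp only [Nat.choose_zero_right]
  ring
lemma f_rec (a : ℕ) (b : ℤ) : f (a+1) b 2 2 = 2 * f a b 2 2 + f a (b-1) 2 2 := by
  unfold f
  have hc : ((a+1:ℕ):ℤ) = (a:ℤ) + 1 := by push_cast; ring
  simp only [hc]
  rw [show a+1+1 = a+2 from rfl,
    sum_pascal a (fun i => chooseZ ((a+1)*2+2 - i*2) ((a:ℤ)+1+b))]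
  rw [Finset.mul_sum, ← Finset.sum_add_distrib]
  refine Finset.sum_congr rfl fun i hi => ?_
  have hia : i ≤ a := by simpa [Nat.lt_succ_iff] using hi
  rw [show (a+1)*2+2 - i*2 = (a*2+2 - i*2) + 2 by omega,
    show (a+1)*2+2 - (i+1)*2 = a*2+2 - i*2 by omega,
    chooseZ_add_two]
  rw [show (a:ℤ)+1+b-1 = (a:ℤ)+b by ring, show (a:ℤ)+1+b-2 = (a:ℤ)+(b-1) by ring]
  ring
lemma f_zero (a : ℕ) (b : ℤ) (h : b < 0 ∨ (a:ℤ)+2 < b) : f a b 2 2 = 0 := by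
  induction a generalizing b with
  | zero =>
    have h0 : f 0 b 2 2 = chooseZ 2 b := by
      unfold f
      rw [show (0+1)=1 from rfl, Finset.sum_range_one]
      norm_num
    rw [h0]; unfold chooseZ
    rcases h with h|h
    · rw [if_neg (by omega)]
    · split
      · simp [Nat.choose_eq_zero_of_lt (show 2 < b.toNat by omega)]
      · rfl
  | succ a ih =>
    rw [f_rec, ih b (by omega), ih (b-1) (by omega)]
    ring
lemma c_zero (n : ℕ) (k : ℤ) (m p : ℕ)
    (h : ¬(0 ≤ k ∧ k ≤ (n:ℤ) ∧ (n:ℤ) % 2 = k % 2 ∧ 2*(m:ℤ) ≤ (n:ℤ) + k)) :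
    c n k m p = 0 := by
  unfold c; rw [if_neg h]
lemma c_eval (n : ℕ) (k : ℤ) (a b : ℕ) (h1 : (n:ℤ) + k = 2*a + 4) (h2 : (n:ℤ) - k = 2*b)
    (hk : 0 ≤ k) : c n k 2 2 = (-1)^b * f a (b:ℤ) 2 2 := by
  unfold c
  rw [if_pos (by push_cast; omega)]
  rw [show (((n:ℤ)-k)/2).toNat = b by omega, show ((n:ℤ)-k)/2 = (b:ℤ) by omega,
    show (((n:ℤ)+k-2*((2:ℕ):ℤ))/2).toNat = a by push_cast; omega]
lemma c_rec (n : ℕ) (hn : 5 ≤ n) (j : ℕ) :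
    c (n+1) (j:ℤ) 2 2 = 2 * c n ((j:ℤ)-1) 2 2 - c (n-1) (j:ℤ) 2 2 := by
  by_cases hpar : ((n:ℤ)+1) % 2 = (j:ℤ) % 2
  · by_cases hbig : n + 2 ≤ j
    · rw [c_zero (n+1) ((j:ℕ):ℤ) 2 2 (by omega),
        c_zero n (((j:ℕ):ℤ)-1) 2 2 (by omega),
        c_zero (n-1) ((j:ℕ):ℤ) 2 2 (by omega)]
      ring
    · by_cases htop : j = n + 1
      · subst htop
        rw [c_eval (n+1) (((n+1:ℕ)):ℤ) (n-1) 0 (by omega) (by omega) (by omega),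
          c_eval n (((n+1:ℕ):ℤ)-1) (n-2) 0 (by omega) (by omega) (by omega),
          c_zero (n-1) ((n+1:ℕ):ℤ) 2 2 (by omega)]
        have hr := f_rec (n-2) ((0:ℕ):ℤ)
        rw [show n-2+1 = n-1 by omega] at hr
        rw [hr, f_zero (n-2) (((0:ℕ):ℤ)-1) (Or.inl (by norm_num))]
        ring
      · by_cases hj0 : j = 0
        · subst hj0
          obtain ⟨a, rfl⟩ : ∃ a : ℕ, n = 2*a+5 := ⟨(n-5)/2, by omega⟩
          rw [c_eval (2*a+5+1) ((0:ℕ):ℤ) (a+1) (a+3) (by omega) (by omega) (by omega),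
            c_zero (2*a+5) (((0:ℕ):ℤ)-1) 2 2 (by omega),
            c_eval (2*a+5-1) ((0:ℕ):ℤ) a (a+2) (by omega) (by omega) (by omega)]
          have hr := f_rec a ((a+3:ℕ):ℤ)
          rw [show ((a+3:ℕ):ℤ)-1 = ((a+2:ℕ):ℤ) by push_cast; ring] at hr
          rw [hr, f_zero a ((a+3:ℕ):ℤ) (Or.inr (by omega)), pow_succ]
          ring
        · have hj1 : 1 ≤ j ∧ j ≤ n - 1 := by omega
          obtain ⟨a, ha⟩ : ∃ a:ℕ, (n:ℤ)+j = 2*a+5 := ⟨(n+j-5)/2, by omega⟩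
          obtain ⟨b, hb⟩ : ∃ b:ℕ, (n:ℤ)-j = 2*b+1 := ⟨(n-j-1)/2, by omega⟩
          rw [c_eval (n+1) ((j:ℕ):ℤ) (a+1) (b+1) (by omega) (by omega) (by omega),
            c_eval n (((j:ℕ):ℤ)-1) a (b+1) (by omega) (by omega) (by omega),
            c_eval (n-1) ((j:ℕ):ℤ) a b (by omega) (by omega) (by omega)]
          have hr := f_rec a ((b+1:ℕ):ℤ)
          rw [show ((b+1:ℕ):ℤ)-1 = (b:ℤ) by push_cast; ring] at hr
          rw [hr, pow_succ]
          ring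
  · rw [c_zero (n+1) ((j:ℕ):ℤ) 2 2 (by omega),
      c_zero n (((j:ℕ):ℤ)-1) 2 2 (by omega),
      c_zero (n-1) ((j:ℕ):ℤ) 2 2 (by omega)]
    ring
lemma P_coeff (n m p j : ℕ) : (P n m p).coeff j = (c n (j:ℤ) m p : ℝ) := by
  unfold P
  rw [Polynomial.finset_sum_coeff]
  simp only [Polynomial.coeff_C_mul, Polynomial.coeff_X_pow, mul_ite, mul_one, mul_zero]
  rw [Finset.sum_ite_eq (Finset.range (n+1)) j (fun k => (c n (k:ℤ) m p : ℝ))]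
  split
  · rfl
  · rw [c_zero n (j:ℤ) m p (by simp_all [Finset.mem_range])]
    norm_num
lemma P_rec (n : ℕ) (hn : 5 ≤ n) :
    P (n+1) 2 2 = Polynomial.C 2 * (Polynomial.X * P n 2 2) - P (n-1) 2 2 := by
  ext j
  rw [Polynomial.coeff_sub, Polynomial.coeff_C_mul, P_coeff, P_coeff]
  cases j with
  | zero =>
    have hx : (Polynomial.X * P n 2 2).coeff 0 = 0 := by simp
    rw [hx]
    have h := c_rec n hn 0
    rw [c_zero n (((0:ℕ):ℤ)-1) 2 2 (by omega)] at h
    rw [h]; push_cast; ring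
  | succ j =>
    rw [Polynomial.coeff_X_mul, P_coeff]
    have h := c_rec n hn (j+1)
    rw [show ((j+1:ℕ):ℤ)-1 = ((j:ℕ):ℤ) by push_cast; ring] at h
    rw [h]; push_cast; ring
lemma U2' : Polynomial.Chebyshev.U ℝ 2 = 4*Polynomial.X^2 - 1 := by
  have h := Polynomial.Chebyshev.U_add_two ℝ 0
  norm_num at h
  rw [h]; ring
lemma U3' : Polynomial.Chebyshev.U ℝ 3 = 8*Polynomial.X^3 - 4*Polynomial.X := by
  have h := Polynomial.Chebyshev.U_add_two ℝ 1
  norm_num at h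
  rw [h, U2']; ring
lemma base4 : P 4 2 2 = Polynomial.X ^ 2 * Polynomial.Chebyshev.U ℝ ((4 : ℤ) - 2)
      - 2 * Polynomial.X * Polynomial.Chebyshev.U ℝ ((4 : ℤ) - 3)
      + Polynomial.Chebyshev.U ℝ ((4 : ℤ) - 4) := by
  have e0 : c 4 ((0:ℕ):ℤ) 2 2 = 1 := by decide
  have e1 : c 4 ((1:ℕ):ℤ) 2 2 = 0 := by decide
  have e2 : c 4 ((2:ℕ):ℤ) 2 2 = -5 := by decide
  have e3 : c 4 ((3:ℕ):ℤ) 2 2 = 0 := by decide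
  have e4 : c 4 ((4:ℕ):ℤ) 2 2 = 4 := by decide
  unfold P
  rw [Finset.sum_range_succ, Finset.sum_range_succ, Finset.sum_range_succ,
    Finset.sum_range_succ, Finset.sum_range_succ, Finset.sum_range_zero,
    e0, e1, e2, e3, e4,
    show (4:ℤ)-2 = 2 by norm_num, show (4:ℤ)-3 = 1 by norm_num, show (4:ℤ)-4 = 0 by norm_num,
    U2', Polynomial.Chebyshev.U_one, Polynomial.Chebyshev.U_zero]
  push_cast
  simp only [map_ofNat, map_neg, map_one, map_zero, Polynomial.C_1]
  ring
lemma base5 : P 5 2 2 = Polynomial.X ^ 2 * Polynomial.Chebyshev.U ℝ ((5 : ℤ) - 2)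
      - 2 * Polynomial.X * Polynomial.Chebyshev.U ℝ ((5 : ℤ) - 3)
      + Polynomial.Chebyshev.U ℝ ((5 : ℤ) - 4) := by
  have e0 : c 5 ((0:ℕ):ℤ) 2 2 = 0 := by decide
  have e1 : c 5 ((1:ℕ):ℤ) 2 2 = 4 := by decide
  have e2 : c 5 ((2:ℕ):ℤ) 2 2 = 0 := by decide
  have e3 : c 5 ((3:ℕ):ℤ) 2 2 = -12 := by decide
  have e4 : c 5 ((4:ℕ):ℤ) 2 2 = 0 := by decide
  have e5 : c 5 ((5:ℕ):ℤ) 2 2 = 8 := by decide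
  unfold P
  rw [Finset.sum_range_succ, Finset.sum_range_succ, Finset.sum_range_succ,
    Finset.sum_range_succ, Finset.sum_range_succ, Finset.sum_range_succ, Finset.sum_range_zero,
    e0, e1, e2, e3, e4, e5,
    show (5:ℤ)-2 = 3 by norm_num, show (5:ℤ)-3 = 2 by norm_num, show (5:ℤ)-4 = 1 by norm_num,
    U3', U2', Polynomial.Chebyshev.U_one]
  push_cast
  simp only [map_ofNat, map_neg, map_one, map_zero, Polynomial.C_1]
  ring

/-- For n ≥ 4, `P_n(x) = x² U_{n-2}(x) - 2x U_{n-3}(x) + U_{n-4}(x)`. -/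
theorem statement1 (n : ℕ) (hn : 4 ≤ n) :
    P n 2 2 = Polynomial.X ^ 2 * Polynomial.Chebyshev.U ℝ ((n : ℤ) - 2)
      - 2 * Polynomial.X * Polynomial.Chebyshev.U ℝ ((n : ℤ) - 3)
      + Polynomial.Chebyshev.U ℝ ((n : ℤ) - 4) := by
  obtain ⟨d, rfl⟩ : ∃ d, n = d + 4 := ⟨n - 4, by omega⟩
  clear hn
  induction d using Nat.twoStepInduction with
  | zero =>
    have h := base4
    push_cast at h ⊢
    ring_nf at h ⊢
    convert h using 2 <;> norm_num
  | one =>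
    have h := base5
    push_cast at h ⊢
    ring_nf at h ⊢
    convert h using 2 <;> norm_num
  | more d ih1 ih2 =>
    have hrec := P_rec (d+5) (by omega)
    rw [show d+5+1 = d+2+4 by omega, show d+5-1 = d+4 by omega,
      show d+5 = d+1+4 by omega] at hrec
    rw [hrec, ih1, ih2]
    have hU4 := Polynomial.Chebyshev.U_add_two ℝ ((d:ℤ)+2)
    have hU3 := Polynomial.Chebyshev.U_add_two ℝ ((d:ℤ)+1)
    have hU2 := Polynomial.Chebyshev.U_add_two ℝ ((d:ℤ))
    push_cast at hU4 hU3 hU2 ⊢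
    ring_nf at hU4 hU3 hU2 ⊢
    rw [hU4, hU3, hU2]
    simp only [map_ofNat]
    ring
end
end

section
/- For all integers n, k, m ≥ 0 one has f(n,k,m,2) = Σ_{i=0}^{n} Σ_{j=0}^{i} C(n,i) C(i,j) C(m, k-i+j), where binomial coefficients with negative or out-of-range lower index are 0. -/
open Finset Polynomial Real

noncomputable section

lemma chooseZ_ofNat (a b : ℕ) : chooseZ a (b : ℤ) = (a.choose b : ℤ) := by
  simp [chooseZ]

lemma vand (i m k : ℕ) : ((i+m).choose k : ℤ)
    = ∑ j ∈ Finset.range (i+1), (i.choose j : ℤ) * chooseZ m ((k:ℤ) - i + j) := by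
  set g : ℕ → ℤ := fun j => (i.choose j : ℤ) * chooseZ m ((k:ℤ) - j) with hg
  have h1 : ∑ j ∈ Finset.range (i+1), (i.choose j : ℤ) * chooseZ m ((k:ℤ) - i + j)
      = ∑ j ∈ Finset.range (i+1), g j := by
    rw [← Finset.sum_range_reflect]
    refine Finset.sum_congr rfl fun j hj => ?_
    simp only [Finset.mem_range] at hj
    have hj' : j ≤ i := by omega
    have : (i + 1 - 1 - j) = i - j := by omega
    rw [this, Nat.choose_symm hj']
    congr 2
    push_cast [Nat.cast_sub hj']
    ring
  have h2 : ∑ j ∈ Finset.range (i+1), g j = ∑ j ∈ Finset.range (max i k + 1), g j := by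
    refine Finset.sum_subset (by intro x hx; simp only [Finset.mem_range] at *; omega) ?_
    intro x hx hx'
    simp only [Finset.mem_range] at hx hx'
    have : i.choose x = 0 := Nat.choose_eq_zero_of_lt (by omega)
    simp [hg, this]
  have h3 : ∑ j ∈ Finset.range (k+1), g j = ∑ j ∈ Finset.range (max i k + 1), g j := by
    refine Finset.sum_subset (by intro x hx; simp only [Finset.mem_range] at *; omega) ?_
    intro x hx hx'
    simp only [Finset.mem_range] at hx hx'
    have : ¬ (0:ℤ) ≤ (k:ℤ) - x := by omega
    simp only [hg, chooseZ, if_neg this, mul_zero]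
  have h4 : ((i+m).choose k : ℤ) = ∑ j ∈ Finset.range (k+1), g j := by
    rw [Nat.add_choose_eq, Finset.Nat.sum_antidiagonal_eq_sum_range_succ_mk]
    push_cast
    refine Finset.sum_congr rfl fun j hj => ?_
    simp only [Finset.mem_range] at hj
    have hj' : j ≤ k := by omega
    have : ((k:ℤ) - j) = ((k - j : ℕ) : ℤ) := by push_cast [Nat.cast_sub hj']; ring
    rw [hg]
    simp only [this, chooseZ_ofNat]
  rw [h1, h2, ← h3, ← h4]

lemma polyid (n m : ℕ) :
    (∑ i ∈ Finset.range (n+1), Polynomial.C ((-1)^i * (n.choose i : ℤ)) * (X+1)^(2*(n-i)+m))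
    = X^n * ∑ i ∈ Finset.range (n+1), Polynomial.C ((n.choose i : ℤ)) * (X+1)^(i+m) := by
  have A : ((X+1:ℤ[X])^2 - 1)^n
      = ∑ i ∈ Finset.range (n+1), Polynomial.C ((-1)^i * (n.choose i : ℤ)) * (X+1)^(2*(n-i)) := by
    have := add_pow ((X+1:ℤ[X])^2) (-1) n
    rw [show ((X+1:ℤ[X])^2 + -1) = (X+1)^2 - 1 by ring] at this
    rw [this, ← Finset.sum_range_reflect]
    refine Finset.sum_congr rfl fun i hi => ?_
    simp only [Finset.mem_range] at hi
    have hi' : i ≤ n := by omega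
    rw [show (n + 1 - 1 - i) = n - i by omega, Nat.choose_symm hi',
      show n - (n - i) = i by omega, ← pow_mul]
    have : ((-1 : ℤ[X]))^i = Polynomial.C ((-1:ℤ)^i) := by simp
    rw [this]
    simp only [map_mul, map_pow, map_natCast]
    ring_nf
  have B : ((X+1:ℤ[X])^2 - 1)^n
      = X^n * ∑ i ∈ Finset.range (n+1), Polynomial.C ((n.choose i : ℤ)) * (X+1)^i := by
    have h1 : ((X+1:ℤ[X])^2 - 1) = X * (X + 2) := by ring
    have h2 : ((X:ℤ[X]) + 2)^n = ∑ i ∈ Finset.range (n+1), Polynomial.C ((n.choose i : ℤ)) * (X+1)^i := by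
      have := add_pow ((X:ℤ[X])+1) 1 n
      rw [show ((X:ℤ[X])+1+1) = X + 2 by ring] at this
      rw [this]
      refine Finset.sum_congr rfl fun i hi => ?_
      simp only [one_pow, mul_one, map_natCast]
      ring
    rw [h1, mul_pow, h2]
  calc (∑ i ∈ Finset.range (n+1), Polynomial.C ((-1)^i * (n.choose i : ℤ)) * (X+1)^(2*(n-i)+m))
      = (∑ i ∈ Finset.range (n+1), Polynomial.C ((-1)^i * (n.choose i : ℤ)) * (X+1)^(2*(n-i))) * (X+1)^m := by
        rw [Finset.sum_mul]; refine Finset.sum_congr rfl fun i _ => ?_; rw [pow_add]; ring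
    _ = (X^n * ∑ i ∈ Finset.range (n+1), Polynomial.C ((n.choose i : ℤ)) * (X+1)^i) * (X+1)^m := by rw [← A, B]
    _ = X^n * ∑ i ∈ Finset.range (n+1), Polynomial.C ((n.choose i : ℤ)) * (X+1)^(i+m) := by
        rw [Finset.mul_sum, Finset.mul_sum, Finset.sum_mul]
        refine Finset.sum_congr rfl fun i _ => ?_
        rw [pow_add]; ring

/-- For n, k, m ≥ 0,
`f(n,k,m,2) = ∑_{i=0}^{n} ∑_{j=0}^{i} C(n,i) C(i,j) C(m, k-i+j)`. -/
theorem statement14 (n k m : ℕ) :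
    f n k m 2 = ∑ i ∈ Finset.range (n + 1), ∑ j ∈ Finset.range (i + 1),
      (n.choose i : ℤ) * (i.choose j : ℤ) * chooseZ m ((k : ℤ) - i + j) := by
  have key := congrArg (fun p => Polynomial.coeff p (n + k)) (polyid n m)
  simp only [Polynomial.finset_sum_coeff] at key
  have L : ∑ i ∈ Finset.range (n+1),
      (Polynomial.C ((-1)^i * (n.choose i : ℤ)) * (X+1)^(2*(n-i)+m)).coeff (n+k) = f n k m 2 := by
    unfold f
    refine Finset.sum_congr rfl fun i hi => ?_
    simp only [Finset.mem_range] at hi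
    rw [Polynomial.coeff_C_mul, Polynomial.coeff_X_add_one_pow,
      show n * 2 + m - i * 2 = 2*(n-i)+m by omega,
      show (n:ℤ) + (k:ℤ) = ((n+k : ℕ) : ℤ) by push_cast; ring, chooseZ_ofNat]
  have R : ((X:ℤ[X])^n * ∑ i ∈ Finset.range (n+1),
        Polynomial.C ((n.choose i : ℤ)) * (X+1)^(i+m)).coeff (n+k)
      = ∑ i ∈ Finset.range (n+1), (n.choose i : ℤ) * ((i+m).choose k : ℤ) := by
    rw [show n + k = k + n by omega, Polynomial.coeff_X_pow_mul, Polynomial.finset_sum_coeff]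
    refine Finset.sum_congr rfl fun i _ => ?_
    rw [Polynomial.coeff_C_mul, Polynomial.coeff_X_add_one_pow, add_comm i m]

  rw [← L, key, R]
  refine Finset.sum_congr rfl fun i _ => ?_
  rw [vand i m k, Finset.mul_sum]
  refine Finset.sum_congr rfl fun j _ => ?_
  ring
end
end

section
/- For all integers n ≥ 0 and 0 ≤ k ≤ n one has f(n,k,0,2) = Σ_{s=0}^{n-k} C(n,s) C(n-s,k). -/
open Finset Polynomial Real

noncomputable section

lemma lhs_eval (n k : ℕ) (hk : k ≤ n) :
    f n k 0 2 = (n.choose k : ℤ) * 2 ^ (n - k) := by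
  have key : f n k 0 2 = ((((1 + X : ℤ[X]) ^ 2 - 1) ^ n)).coeff (n + k) := by
    rw [sub_pow, Polynomial.finset_sum_coeff, ← Finset.sum_range_reflect]
    unfold f
    refine Finset.sum_congr rfl ?_
    intro i hi
    rw [Finset.mem_range] at hi
    have hi' : i ≤ n := by omega
    simp only [Nat.add_sub_cancel]
    have hsign : (-1 : ℤ[X]) ^ (n - i + n) = (-1) ^ i := by
      rw [show n - i + n = i + 2 * (n - i) by omega, pow_add, pow_mul]
      simp
    have e1 : (-1 : ℤ[X]) ^ (n - i + n) * ((1 + X) ^ 2) ^ (n - i) * 1 ^ (n - (n - i)) *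
        ((n.choose (n - i) : ℕ) : ℤ[X]) = C ((-1) ^ i * (n.choose i : ℤ)) * (1 + X) ^ (2 * (n - i)) := by
      rw [Nat.choose_symm hi', ← pow_mul, one_pow, mul_one, hsign]
      simp only [map_mul, map_pow, map_neg, map_one, Polynomial.C_eq_natCast]
      ring
    rw [e1, Polynomial.coeff_C_mul, Polynomial.coeff_one_add_X_pow]
    have e2 : chooseZ (n * 2 + 0 - i * 2) ((n : ℤ) + k) = ((2 * (n - i)).choose (n + k) : ℤ) := by
      unfold chooseZ
      rw [if_pos (by positivity)]
      have h1 : n * 2 + 0 - i * 2 = 2 * (n - i) := by omega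
      have h2 : (((n : ℤ) + k)).toNat = n + k := by omega
      rw [h1, h2]
    rw [e2]
  have split : ((1 + X : ℤ[X]) ^ 2 - 1) ^ n = X ^ n * (X + C 2) ^ n := by
    rw [← mul_pow]
    have : (C 2 : ℤ[X]) = 2 := by norm_num
    rw [this]
    ring
  rw [key, split, show n + k = k + n by omega, Polynomial.coeff_X_pow_mul,
    Polynomial.coeff_X_add_C_pow]
  ring

lemma rhs_nat (n k : ℕ) (hk : k ≤ n) :
    ∑ s ∈ Finset.range (n - k + 1), n.choose s * (n - s).choose k = n.choose k * 2 ^ (n - k) := by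
  have step : ∀ s ∈ Finset.range (n - k + 1),
      n.choose s * (n - s).choose k = n.choose k * (n - k).choose s := by
    intro s hs
    rw [Finset.mem_range] at hs
    have h1 := Nat.choose_mul (n := n) (show s ≤ s + k by omega)
    have h2 := Nat.choose_mul (n := n) (show k ≤ s + k by omega)
    rw [show s + k - s = k by omega] at h1
    rw [show s + k - k = s by omega] at h2
    have h3 : (s + k).choose s = (s + k).choose k := by
      rw [← Nat.choose_symm (show k ≤ s + k by omega), show s + k - k = s by omega]
    rw [← h1, h3, h2]
  rw [Finset.sum_congr rfl step, ← Finset.mul_sum, Nat.sum_range_choose]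

/-- For 0 ≤ k ≤ n, `f(n,k,0,2) = ∑_{s=0}^{n-k} C(n,s) C(n-s,k)`. -/
theorem statement15 (n k : ℕ) (hk : k ≤ n) :
    f n k 0 2 = ∑ s ∈ Finset.range (n - k + 1), (n.choose s : ℤ) * ((n - s).choose k : ℤ) := by
  rw [lhs_eval n k hk]
  exact_mod_cast congrArg (Nat.cast : ℕ → ℤ) (rhs_nat n k hk).symm
end
end

section
/- For integers n ≥ 0 and 0 ≤ k ≤ n, the coefficient of x^k in the Chebyshev polynomial of the second kind U_n equals (-1)^{(n-k)/2} Σ_{i=0}^{k} C((n+k)/2, i) C((n+k)/2 - i, (n-k)/2) when n and k have the same parity, and equals 0 when n and k have different parity. -/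
open Finset Polynomial Real

noncomputable section

lemma sum_eq (k r : ℕ) : ∑ i ∈ Finset.range (k+1), (k+r).choose i * (k+r-i).choose r
    = (k+r).choose r * 2^k := by
  have h : ∀ i ∈ Finset.range (k+1),
      (k+r).choose i * (k+r-i).choose r = (k+r).choose r * k.choose i := by
    intro i hi
    simp only [Finset.mem_range] at hi
    have hik : i ≤ k := by omega
    have h1 : (k+r).choose i = (k+r).choose (k+r-i) := (Nat.choose_symm (by omega)).symm
    have h2 := Nat.choose_mul (n := k+r) (k := k+r-i) (s := r) (by omega)
    rw [h1, h2, show k + r - r = k by omega, show k + r - i - r = k - i by omega,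
      Nat.choose_symm hik]
  rw [Finset.sum_congr rfl h, ← Finset.mul_sum, Nat.sum_range_choose]


lemma coeffU : ∀ (n : ℕ) (k : ℕ), (Polynomial.Chebyshev.U ℤ (n : ℤ)).coeff k =
    if n % 2 = k % 2 ∧ k ≤ n then
      (-1)^((n-k)/2) * (((n+k)/2).choose ((n-k)/2) : ℤ) * 2^k else 0 := by
  intro n
  induction n using Nat.twoStepInduction with
  | zero =>
    intro k
    rcases k with _ | k
    · simp [Polynomial.Chebyshev.U_zero]
    · simp [Polynomial.Chebyshev.U_zero, coeff_one, Nat.succ_ne_zero]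
  | one =>
    intro k
    rcases k with _ | k
    · simp [Polynomial.Chebyshev.U_one]
    · rcases k with _ | k
      · norm_num [Polynomial.Chebyshev.U_one, coeff_X_one]
      · simp only [Nat.cast_one, Polynomial.Chebyshev.U_one]
        rw [coeff_ofNat_mul, coeff_X]
        simp only [show ¬((1:ℕ) = k+2) by omega, if_false, mul_zero]
        rw [if_neg (by omega)]
  | more n ih1 ih2 =>
    intro k
    have hc : ((n + 2 : ℕ) : ℤ) = (n : ℤ) + 2 := by push_cast; ring
    rw [hc, Polynomial.Chebyshev.U_add_two, coeff_sub]
    have hc1 : ((n + 1 : ℕ) : ℤ) = (n : ℤ) + 1 := by push_cast; ring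
    rw [← hc1]
    rcases k with _ | k
    · rw [mul_assoc, coeff_ofNat_mul, mul_coeff_zero, coeff_X_zero, zero_mul, mul_zero,
        zero_sub, ih1 0]
      by_cases hp : n % 2 = 0
      · rw [if_pos ⟨hp, Nat.zero_le _⟩, if_pos ⟨by omega, Nat.zero_le _⟩]
        rw [show (n+2+0)/2 = n/2 + 1 by omega, show (n+2-0)/2 = n/2+1 by omega,
          show (n+0)/2 = n/2 by omega, show (n-0)/2 = n/2 by omega]
        simp [pow_succ]
      · rw [if_neg (by omega), if_neg (by omega), neg_zero]
    · rw [mul_assoc, coeff_ofNat_mul, coeff_X_mul, ih1 (k+1), ih2 k]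
      by_cases hp : (n + 2) % 2 = (k + 1) % 2
      · have hp1 : (n+1) % 2 = k % 2 := by omega
        have hpn : n % 2 = (k+1) % 2 := by omega
        by_cases hkn : k + 1 ≤ n
        · obtain ⟨b, hb⟩ : ∃ b, n = k + 1 + 2 * b := ⟨(n - (k+1))/2, by omega⟩
          subst hb
          rw [if_pos ⟨hp1, by omega⟩, if_pos ⟨hpn, by omega⟩, if_pos ⟨hp, by omega⟩]
          rw [show (k+1+2*b+1+k)/2 = k+1+b by omega, show (k+1+2*b+1-k)/2 = b+1 by omega,
            show (k+1+2*b+(k+1))/2 = k+1+b by omega, show (k+1+2*b-(k+1))/2 = b by omega,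
            show (k+1+2*b+2+(k+1))/2 = k+2+b by omega, show (k+1+2*b+2-(k+1))/2 = b+1 by omega]
          rw [show k+2+b = (k+1+b)+1 by omega, Nat.choose_succ_succ' (k+1+b) b]
          push_cast
          ring
        · -- k+1 > n
          by_cases hkn2 : k ≤ n + 1
          case neg =>
            rw [if_neg (by omega), if_neg (by omega), if_neg (by omega)]
            ring
          -- parity forces k = n+1
          have hk : k = n + 1 := by omega
          subst hk
          rw [if_pos ⟨hp1, le_refl _⟩, if_neg (by omega), if_pos ⟨hp, by omega⟩]
          rw [show (n+1+(n+1))/2 = n+1 by omega, show (n+1-(n+1))/2 = 0 by omega,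
            show (n+2+(n+1+1))/2 = n+2 by omega, show (n+2-(n+1+1))/2 = 0 by omega]
          simp [pow_succ]
          ring
      · rw [if_neg (by omega), if_neg (by omega), if_neg (by omega)]
        ring

/-- For 0 ≤ k ≤ n, the coefficient of `x^k` in `U_n` equals
`(-1)^{(n-k)/2} ∑_{i=0}^{k} C((n+k)/2, i) C((n+k)/2 - i, (n-k)/2)` when n, k have the same
parity, and 0 otherwise. -/
theorem statement16 (n k : ℕ) (hk : k ≤ n) :
    (Polynomial.Chebyshev.U ℤ (n : ℤ)).coeff k =
      if n % 2 = k % 2 then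
        (-1) ^ ((n - k) / 2) * ∑ i ∈ Finset.range (k + 1),
          (((n + k) / 2).choose i : ℤ) * (((n + k) / 2 - i).choose ((n - k) / 2) : ℤ)
      else 0 := by
  rw [coeffU n k]
  by_cases hp : n % 2 = k % 2
  · rw [if_pos ⟨hp, hk⟩, if_pos hp]
    have hm : (n + k) / 2 = k + (n - k) / 2 := by omega
    rw [hm, show (∑ i ∈ Finset.range (k+1),
        ((k + (n-k)/2).choose i : ℤ) * (((k + (n-k)/2 - i).choose ((n-k)/2) : ℤ))) =
        ((∑ i ∈ Finset.range (k+1),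
          (k + (n-k)/2).choose i * ((k + (n-k)/2 - i).choose ((n-k)/2)) : ℕ) : ℤ) by
          push_cast; rfl,
      sum_eq k ((n-k)/2)]
    push_cast
    ring
  · rw [if_neg (by omega), if_neg hp]
end
end
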